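/- Assume every net in the family has at most 3 elements and that d_w(v) > 0 for every v in C0. Then the map C ↦ (B1,B2) with B2 = C ∪ {t} and B1 = (C0 ∖ C) ∪ {s} is a bijection from the collection of proper subsets C of C0 with u ∈ C and cut(C)/d_w(C) < cut(C0)/d_w(C0) onto the collection of s-t cuts of the clique-expansion flow graph G_f whose weight is strictly less than cut(C0)·d_w(C0). -/

import Mathlib

open scoped ENNReal

namespace Stmt1

/-- Nodes of the flow graph: the elements of `C0` (via `base`), a source `s`
(with which the contracted node `r` is identified) and a sink `t`. -/
inductive Node (α : Type*) where
  | base : α → Node α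
  | s : Node α
  | t : Node α
  deriving DecidableEq

variable {α ι : Type*} [DecidableEq α] [DecidableEq ι]

/-- `cut C` : total weight of the nets containing an element of `C` and an
element of `(C0 ∪ {r}) \ C`. -/
def cut (C0 : Finset α) (r : α) (Nets : Finset ι) (net : ι → Finset α) (w : ι → ℝ)
    (C : Finset α) : ℝ :=
  ∑ i ∈ Nets.filter
      (fun i => (net i ∩ C).Nonempty ∧ (net i ∩ (insert r C0 \ C)).Nonempty), w i

/-- weighted degree `d_w(v)` : total weight of the nets containing `v`. -/
def dw (Nets : Finset ι) (net : ι → Finset α) (w : ι → ℝ) (v : α) : ℝ :=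
  ∑ i ∈ Nets.filter (fun i => v ∈ net i), w i

/-- weighted volume `d_w(C)`. -/
def dwS (Nets : Finset ι) (net : ι → Finset α) (w : ι → ℝ) (C : Finset α) : ℝ :=
  ∑ v ∈ C, dw Nets net w v

/-- Capacities of the clique-expansion flow graph `G_f`. -/
noncomputable def cliqueCap (C0 : Finset α) (r u : α) (Nets : Finset ι)
    (net : ι → Finset α) (w : ι → ℝ) : Node α → Node α → ℝ≥0∞
  | Node.base a, Node.base b =>
      if a ∈ C0 ∧ b ∈ C0 ∧ a ≠ b then
        ENNReal.ofReal (dwS Nets net w C0 *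
          ∑ i ∈ Nets.filter (fun i => a ∈ net i ∧ b ∈ net i),
            w i / (((net i).card : ℝ) - 1))
      else 0
  | Node.s, Node.base b =>
      if b ∈ C0 then
        ENNReal.ofReal (dwS Nets net w C0 *
          ∑ i ∈ Nets.filter (fun i => r ∈ net i ∧ b ∈ net i),
            w i / (((net i).card : ℝ) - 1))
      else 0
  | Node.base a, Node.t =>
      if a ∈ C0 then
        (if a = u then ⊤
         else ENNReal.ofReal (cut C0 r Nets net w C0 * dw Nets net w a))
      else 0
  | _, _ => 0

/-- The node set of the flow graph: `C0 ∪ {s, t}`. -/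
def nodeSet (C0 : Finset α) : Finset (Node α) :=
  C0.image Node.base ∪ {Node.s, Node.t}

lemma ab_eq (a b k : ℕ) (ha : 1 ≤ a) (hb : 1 ≤ b) (hk : a + b = k) (h3 : k ≤ 3) :
    a * b = k - 1 := by
  have ha2 : a ≤ 2 := by omega
  have hb2 : b ≤ 2 := by omega
  interval_cases a <;> interval_cases b <;> omega

lemma per_net (C0 C : Finset α) (r : α) (hr : r ∉ C0) (hC : C ⊆ C0)
    (e : Finset α) (he : e ⊆ insert r C0) (h2 : 2 ≤ e.card) (h3 : e.card ≤ 3)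
    (wi : ℝ) (hwi : 0 < wi) :
    wi / ((e.card : ℝ) - 1) *
        (((e ∩ (C0 \ C)).card : ℝ) * ((e ∩ C).card) +
          (if r ∈ e then ((e ∩ C).card : ℝ) else 0))
      = if (e ∩ C).Nonempty ∧ (e ∩ (insert r C0 \ C)).Nonempty then wi else 0 := by
  have hrC : r ∉ C := fun h => hr (hC h)
  have hsd : e ∩ (insert r C0 \ C) = e \ C := by
    ext a
    simp only [Finset.mem_inter, Finset.mem_sdiff, Finset.mem_insert]
    constructor
    · rintro ⟨ha, -, hc⟩; exact ⟨ha, hc⟩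
    · rintro ⟨ha, hc⟩
      rcases Finset.mem_insert.1 (he ha) with h | h
      · exact ⟨ha, Or.inl h, hc⟩
      · exact ⟨ha, Or.inr h, hc⟩
  have hsplit : (e \ C).card = (e ∩ (C0 \ C)).card + (if r ∈ e then 1 else 0) := by
    have hdecomp : e \ C = (e ∩ (C0 \ C)) ∪ (e ∩ {r}) := by
      ext a
      simp only [Finset.mem_sdiff, Finset.mem_union, Finset.mem_inter,
        Finset.mem_singleton]
      constructor
      · rintro ⟨ha, hc⟩
        rcases Finset.mem_insert.1 (he ha) with h | h
        · exact Or.inr ⟨ha, h⟩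
        · exact Or.inl ⟨ha, h, hc⟩
      · intro h
        rcases h with ⟨ha, -, hc⟩ | ⟨ha, h⟩
        · exact ⟨ha, hc⟩
        · subst h; exact ⟨ha, hrC⟩
    have hdisj : Disjoint (e ∩ (C0 \ C)) (e ∩ {r}) := by
      simp only [Finset.disjoint_left, Finset.mem_inter, Finset.mem_sdiff,
        Finset.mem_singleton]
      rintro a ⟨-, haC0, -⟩ ⟨-, h⟩
      subst h; exact hr haC0
    rw [hdecomp, Finset.card_union_of_disjoint hdisj]
    congr 1
    by_cases h : r ∈ e <;> simp [h, Finset.inter_singleton_of_mem,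
      Finset.inter_singleton_of_notMem]
  rw [hsd]
  by_cases hb : (e ∩ C).Nonempty
  · by_cases ha : (e \ C).Nonempty
    · rw [if_pos (c := (e ∩ C).Nonempty ∧ (e \ C).Nonempty) ⟨hb, ha⟩]
      have hab : (e \ C).card + (e ∩ C).card = e.card :=
        Finset.card_sdiff_add_card_inter e C
      have ha1 : 1 ≤ (e \ C).card := Finset.card_pos.2 ha
      have hb1 : 1 ≤ (e ∩ C).card := Finset.card_pos.2 hb
      have hmul : (e \ C).card * (e ∩ C).card = e.card - 1 :=
        ab_eq _ _ e.card ha1 hb1 hab h3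
      have hcast : ((e ∩ (C0 \ C)).card : ℝ) * ((e ∩ C).card : ℝ) +
          (if r ∈ e then ((e ∩ C).card : ℝ) else 0) = (e.card : ℝ) - 1 := by
        have h1 : ((e ∩ (C0 \ C)).card : ℝ) + (if r ∈ e then 1 else 0)
            = ((e \ C).card : ℝ) := by
          rw [hsplit]; push_cast; by_cases h : r ∈ e <;> simp [h]
        have hrw : ((e ∩ (C0 \ C)).card : ℝ) * ((e ∩ C).card : ℝ) +
            (if r ∈ e then ((e ∩ C).card : ℝ) else 0)
            = (((e \ C).card : ℝ)) * ((e ∩ C).card : ℝ) := by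
          rw [← h1]; by_cases h : r ∈ e <;> simp [h] <;> ring
        rw [hrw]
        have := congrArg (fun n : ℕ => (n : ℝ)) hmul
        push_cast [Nat.cast_sub (by omega : 1 ≤ e.card)] at this
        exact this
      rw [hcast]
      have hne : (e.card : ℝ) - 1 ≠ 0 := by
        have : (2 : ℝ) ≤ (e.card : ℝ) := by exact_mod_cast h2
        linarith
      field_simp
    · have hcond : ¬((e ∩ C).Nonempty ∧ (e \ C).Nonempty) := fun h => ha h.2
      rw [if_neg hcond]
      have h0 : (e ∩ (C0 \ C)) = ∅ := by
        rw [Finset.not_nonempty_iff_eq_empty] at ha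
        apply Finset.eq_empty_of_forall_notMem
        intro x hx
        simp only [Finset.mem_inter, Finset.mem_sdiff] at hx
        have : x ∈ e \ C := Finset.mem_sdiff.2 ⟨hx.1, hx.2.2⟩
        simp [ha] at this
      have hre : r ∉ e := by
        intro h
        have : r ∈ e \ C := Finset.mem_sdiff.2 ⟨h, hrC⟩
        rw [Finset.not_nonempty_iff_eq_empty] at ha
        simp [ha] at this
      simp [h0, hre]
  · have hcond : ¬((e ∩ C).Nonempty ∧ (e \ C).Nonempty) := fun h => hb h.1
    rw [if_neg hcond]
    rw [Finset.not_nonempty_iff_eq_empty] at hb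
    simp [hb]

lemma sum_ite_count (s e : Finset α) (c : ℝ) :
    ∑ y ∈ s, (if y ∈ e then c else 0) = ((e ∩ s).card : ℝ) * c := by
  rw [Finset.sum_ite_mem, Finset.sum_const, nsmul_eq_mul, Finset.inter_comm]

lemma cross_sum (C0 : Finset α) (r : α) (hr : r ∉ C0)
    (Nets : Finset ι) (net : ι → Finset α) (w : ι → ℝ)
    (hsub : ∀ i ∈ Nets, net i ⊆ insert r C0)
    (hcard : ∀ i ∈ Nets, 2 ≤ (net i).card)
    (hsize : ∀ i ∈ Nets, (net i).card ≤ 3)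
    (hw : ∀ i ∈ Nets, 0 < w i)
    (C : Finset α) (hC : C ⊆ C0) :
    ((∑ x ∈ C0 \ C, ∑ y ∈ C,
        ∑ i ∈ Nets.filter (fun i => x ∈ net i ∧ y ∈ net i),
          w i / (((net i).card : ℝ) - 1)) +
      ∑ y ∈ C, ∑ i ∈ Nets.filter (fun i => r ∈ net i ∧ y ∈ net i),
          w i / (((net i).card : ℝ) - 1))
      = cut C0 r Nets net w C := by
  have key : ∀ (a : α) (i : ι),
      (∑ y ∈ C, if a ∈ net i ∧ y ∈ net i then w i / (((net i).card : ℝ) - 1) else 0)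
      = if a ∈ net i then ((net i ∩ C).card : ℝ) * (w i / (((net i).card : ℝ) - 1))
        else 0 := by
    intro a i
    by_cases ha : a ∈ net i
    · simp only [ha, true_and, if_pos]
      exact sum_ite_count C (net i) _
    · simp [ha]
  have h1 : (∑ x ∈ C0 \ C, ∑ y ∈ C,
        ∑ i ∈ Nets.filter (fun i => x ∈ net i ∧ y ∈ net i),
          w i / (((net i).card : ℝ) - 1))
      = ∑ i ∈ Nets, ((net i ∩ (C0 \ C)).card : ℝ) *
          (((net i ∩ C).card : ℝ) * (w i / (((net i).card : ℝ) - 1))) := by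
    simp only [Finset.sum_filter]
    rw [show (∑ x ∈ C0 \ C, ∑ y ∈ C, ∑ i ∈ Nets,
        (if x ∈ net i ∧ y ∈ net i then w i / (((net i).card : ℝ) - 1) else 0))
        = ∑ x ∈ C0 \ C, ∑ i ∈ Nets, ∑ y ∈ C,
        (if x ∈ net i ∧ y ∈ net i then w i / (((net i).card : ℝ) - 1) else 0) from
      Finset.sum_congr rfl fun x _ => Finset.sum_comm]
    rw [Finset.sum_comm]
    refine Finset.sum_congr rfl fun i _ => ?_
    calc ∑ x ∈ C0 \ C, ∑ y ∈ C,
          (if x ∈ net i ∧ y ∈ net i then w i / (((net i).card : ℝ) - 1) else 0)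
        = ∑ x ∈ C0 \ C, (if x ∈ net i then
            ((net i ∩ C).card : ℝ) * (w i / (((net i).card : ℝ) - 1)) else 0) :=
          Finset.sum_congr rfl fun x _ => key x i
      _ = _ := sum_ite_count _ _ _
  have h2 : (∑ y ∈ C, ∑ i ∈ Nets.filter (fun i => r ∈ net i ∧ y ∈ net i),
          w i / (((net i).card : ℝ) - 1))
      = ∑ i ∈ Nets, (if r ∈ net i then
          ((net i ∩ C).card : ℝ) * (w i / (((net i).card : ℝ) - 1)) else 0) := by
    simp only [Finset.sum_filter]
    rw [Finset.sum_comm]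
    exact Finset.sum_congr rfl fun i _ => key r i
  rw [h1, h2, ← Finset.sum_add_distrib]
  unfold cut
  rw [Finset.sum_filter]
  refine Finset.sum_congr rfl fun i hi => ?_
  have := per_net C0 C r hr hC (net i) (hsub i hi) (hcard i hi) (hsize i hi)
    (w i) (hw i hi)
  rw [← this]
  by_cases hre : r ∈ net i <;> simp [hre] <;> ring

section Nonneg
variable (Nets : Finset ι) (net : ι → Finset α) (w : ι → ℝ)

lemma dw_nonneg (hw : ∀ i ∈ Nets, 0 < w i) (v : α) : 0 ≤ dw Nets net w v :=
  Finset.sum_nonneg fun i hi => (hw i (Finset.mem_filter.1 hi).1).le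

lemma dwS_nonneg (hw : ∀ i ∈ Nets, 0 < w i) (C : Finset α) :
    0 ≤ dwS Nets net w C :=
  Finset.sum_nonneg fun v _ => dw_nonneg Nets net w hw v

lemma cut_nonneg (hw : ∀ i ∈ Nets, 0 < w i) (C0 C : Finset α) (r : α) :
    0 ≤ cut C0 r Nets net w C :=
  Finset.sum_nonneg fun i hi => (hw i (Finset.mem_filter.1 hi).1).le

lemma S_nonneg (hcard : ∀ i ∈ Nets, 2 ≤ (net i).card) (hw : ∀ i ∈ Nets, 0 < w i)
    (p : ι → Prop) [DecidablePred p] :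
    0 ≤ ∑ i ∈ Nets.filter p, w i / (((net i).card : ℝ) - 1) := by
  refine Finset.sum_nonneg fun i hi => ?_
  have hi' := (Finset.mem_filter.1 hi).1
  have h2 : (2 : ℝ) ≤ ((net i).card : ℝ) := by exact_mod_cast hcard i hi'
  exact div_nonneg (hw i hi').le (by linarith)

end Nonneg

lemma cutWeight (C0 : Finset α) (u r : α) (hr : r ∉ C0)
    (Nets : Finset ι) (net : ι → Finset α) (w : ι → ℝ)
    (hsub : ∀ i ∈ Nets, net i ⊆ insert r C0)
    (hcard : ∀ i ∈ Nets, 2 ≤ (net i).card)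
    (hsize : ∀ i ∈ Nets, (net i).card ≤ 3)
    (hw : ∀ i ∈ Nets, 0 < w i)
    (C : Finset α) (hC : C ⊆ C0) (huC : u ∈ C) :
    (∑ x ∈ (C0 \ C).image Node.base ∪ {Node.s},
       ∑ y ∈ C.image Node.base ∪ {Node.t}, cliqueCap C0 r u Nets net w x y)
    = ENNReal.ofReal (dwS Nets net w C0 * cut C0 r Nets net w C
        + cut C0 r Nets net w C0 * (dwS Nets net w C0 - dwS Nets net w C)) := by
  have hinj : ∀ a ∈ C0 \ C, ∀ b ∈ C0 \ C, Node.base a = Node.base b → a = b :=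
    fun a _ b _ h => by simpa using h
  have hinj' : ∀ a ∈ C, ∀ b ∈ C, Node.base a = Node.base b → a = b :=
    fun a _ b _ h => by simpa using h
  have hd1 : Disjoint ((C0 \ C).image Node.base) ({Node.s} : Finset (Node α)) := by
    rw [Finset.disjoint_left]
    rintro x hx hxs
    rw [Finset.mem_singleton] at hxs
    subst hxs
    simp at hx
  have hd2 : Disjoint (C.image Node.base) ({Node.t} : Finset (Node α)) := by
    rw [Finset.disjoint_left]
    rintro x hx hxs
    rw [Finset.mem_singleton] at hxs
    subst hxs
    simp at hx
  rw [Finset.sum_union hd1]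
  simp only [Finset.sum_union hd2, Finset.sum_singleton]
  rw [Finset.sum_image hinj, Finset.sum_image hinj']
  simp only [Finset.sum_image hinj']
  have capst : cliqueCap C0 r u Nets net w Node.s Node.t = 0 := rfl
  rw [capst, add_zero]
  set D0 := dwS Nets net w C0 with hD0
  have hD0nn : 0 ≤ D0 := dwS_nonneg Nets net w hw C0
  have hK0nn : 0 ≤ cut C0 r Nets net w C0 := cut_nonneg Nets net w hw C0 C0 r
  have hcapbb : ∀ x ∈ C0 \ C, ∀ y ∈ C,
      cliqueCap C0 r u Nets net w (Node.base x) (Node.base y)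
      = ENNReal.ofReal (D0 * ∑ i ∈ Nets.filter (fun i => x ∈ net i ∧ y ∈ net i),
          w i / (((net i).card : ℝ) - 1)) := by
    intro x hx y hy
    have hx' := Finset.mem_sdiff.1 hx
    have hxy : x ≠ y := fun h => hx'.2 (h ▸ hy)
    simp only [cliqueCap]
    rw [if_pos ⟨hx'.1, hC hy, hxy⟩]
  have hcapbt : ∀ x ∈ C0 \ C,
      cliqueCap C0 r u Nets net w (Node.base x) Node.t
      = ENNReal.ofReal (cut C0 r Nets net w C0 * dw Nets net w x) := by
    intro x hx
    have hx' := Finset.mem_sdiff.1 hx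
    have hxu : x ≠ u := fun h => hx'.2 (h ▸ huC)
    simp only [cliqueCap]
    rw [if_pos hx'.1, if_neg hxu]
  have hcapsb : ∀ y ∈ C,
      cliqueCap C0 r u Nets net w Node.s (Node.base y)
      = ENNReal.ofReal (D0 * ∑ i ∈ Nets.filter (fun i => r ∈ net i ∧ y ∈ net i),
          w i / (((net i).card : ℝ) - 1)) := by
    intro y hy
    simp only [cliqueCap]
    rw [if_pos (hC hy)]
  have hterm1 : ∀ x ∈ C0 \ C,
      ((∑ y ∈ C, cliqueCap C0 r u Nets net w (Node.base x) (Node.base y))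
        + cliqueCap C0 r u Nets net w (Node.base x) Node.t)
      = ENNReal.ofReal ((∑ y ∈ C, D0 *
            ∑ i ∈ Nets.filter (fun i => x ∈ net i ∧ y ∈ net i),
              w i / (((net i).card : ℝ) - 1))
          + cut C0 r Nets net w C0 * dw Nets net w x) := by
    intro x hx
    rw [Finset.sum_congr rfl (fun y hy => hcapbb x hx y hy), hcapbt x hx,
      ← ENNReal.ofReal_sum_of_nonneg (fun y _ =>
        mul_nonneg hD0nn (S_nonneg Nets net w hcard hw _)),
      ← ENNReal.ofReal_add (Finset.sum_nonneg fun y _ =>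
        mul_nonneg hD0nn (S_nonneg Nets net w hcard hw _))
        (mul_nonneg hK0nn (dw_nonneg Nets net w hw x))]
  rw [Finset.sum_congr rfl hterm1,
    Finset.sum_congr rfl hcapsb,
    ← ENNReal.ofReal_sum_of_nonneg (fun x _ => add_nonneg
      (Finset.sum_nonneg fun y _ =>
        mul_nonneg hD0nn (S_nonneg Nets net w hcard hw _))
      (mul_nonneg hK0nn (dw_nonneg Nets net w hw x))),
    ← ENNReal.ofReal_sum_of_nonneg (fun y _ =>
        mul_nonneg hD0nn (S_nonneg Nets net w hcard hw _)),
    ← ENNReal.ofReal_add (Finset.sum_nonneg fun x _ => add_nonneg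
      (Finset.sum_nonneg fun y _ =>
        mul_nonneg hD0nn (S_nonneg Nets net w hcard hw _))
      (mul_nonneg hK0nn (dw_nonneg Nets net w hw x)))
      (Finset.sum_nonneg fun y _ =>
        mul_nonneg hD0nn (S_nonneg Nets net w hcard hw _))]
  congr 1
  have hcross := cross_sum C0 r hr Nets net w hsub hcard hsize hw C hC
  have hsdiff : dwS Nets net w (C0 \ C) = D0 - dwS Nets net w C := by
    have := Finset.sum_sdiff (f := dw Nets net w) hC
    unfold dwS at *
    linarith
  calc (∑ x ∈ C0 \ C, ((∑ y ∈ C, D0 *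
            ∑ i ∈ Nets.filter (fun i => x ∈ net i ∧ y ∈ net i),
              w i / (((net i).card : ℝ) - 1))
          + cut C0 r Nets net w C0 * dw Nets net w x))
        + ∑ y ∈ C, D0 * ∑ i ∈ Nets.filter (fun i => r ∈ net i ∧ y ∈ net i),
            w i / (((net i).card : ℝ) - 1)
      = D0 * ((∑ x ∈ C0 \ C, ∑ y ∈ C,
            ∑ i ∈ Nets.filter (fun i => x ∈ net i ∧ y ∈ net i),
              w i / (((net i).card : ℝ) - 1))
          + ∑ y ∈ C, ∑ i ∈ Nets.filter (fun i => r ∈ net i ∧ y ∈ net i),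
              w i / (((net i).card : ℝ) - 1))
        + cut C0 r Nets net w C0 * dwS Nets net w (C0 \ C) := by
        rw [Finset.sum_add_distrib]
        unfold dwS
        simp only [← Finset.mul_sum]
        ring
    _ = _ := by rw [hcross, hsdiff]

theorem clique_expansion_cut_bijection
    (C0 : Finset α) (u r : α) (hu : u ∈ C0) (hr : r ∉ C0)
    (Nets : Finset ι) (net : ι → Finset α) (w : ι → ℝ)
    (hsub : ∀ i ∈ Nets, net i ⊆ insert r C0)
    (hcard : ∀ i ∈ Nets, 2 ≤ (net i).card)
    (hsize : ∀ i ∈ Nets, (net i).card ≤ 3)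
    (hw : ∀ i ∈ Nets, 0 < w i)
    (hdw : ∀ v ∈ C0, 0 < dw Nets net w v) :
    Set.BijOn
      (fun C : Finset α =>
        (((C0 \ C).image Node.base ∪ {Node.s} : Finset (Node α)),
         (C.image Node.base ∪ {Node.t} : Finset (Node α))))
      {C : Finset α | C ⊂ C0 ∧ u ∈ C ∧
        cut C0 r Nets net w C / dwS Nets net w C <
          cut C0 r Nets net w C0 / dwS Nets net w C0}
      {p : Finset (Node α) × Finset (Node α) |
        p.1 ∪ p.2 = nodeSet C0 ∧ Disjoint p.1 p.2 ∧
        Node.s ∈ p.1 ∧ Node.t ∈ p.2 ∧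
        (∑ x ∈ p.1, ∑ y ∈ p.2, cliqueCap C0 r u Nets net w x y) <
          ENNReal.ofReal (cut C0 r Nets net w C0 * dwS Nets net w C0)} := by
  set D0 := dwS Nets net w C0 with hD0def
  set K0 := cut C0 r Nets net w C0 with hK0def
  have hD0pos : 0 < D0 :=
    Finset.sum_pos' (fun v hv => dw_nonneg Nets net w hw v) ⟨u, hu, hdw u hu⟩
  have hK0nn : 0 ≤ K0 := cut_nonneg Nets net w hw C0 C0 r
  -- the key inequality equivalence
  have hineq : ∀ C : Finset α, C ⊆ C0 → u ∈ C →
      (ENNReal.ofReal (D0 * cut C0 r Nets net w C + K0 * (D0 - dwS Nets net w C))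
        < ENNReal.ofReal (K0 * D0)
      ↔ cut C0 r Nets net w C / dwS Nets net w C < K0 / D0) := by
    intro C hC huC
    have hdwC : 0 < dwS Nets net w C :=
      Finset.sum_pos' (fun v hv => dw_nonneg Nets net w hw v) ⟨u, huC, hdw u (hC huC)⟩
    have hle : dwS Nets net w C ≤ D0 :=
      Finset.sum_le_sum_of_subset_of_nonneg hC
        (fun v _ _ => dw_nonneg Nets net w hw v)
    have hcutnn : 0 ≤ cut C0 r Nets net w C := cut_nonneg Nets net w hw C0 C r
    rw [ENNReal.ofReal_lt_ofReal_iff_of_nonneg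
      (add_nonneg (mul_nonneg hD0pos.le hcutnn)
        (mul_nonneg hK0nn (by linarith))),
      div_lt_div_iff₀ hdwC hD0pos]
    constructor <;> intro h <;> nlinarith
  -- membership conditions for images
  have hmem1 : ∀ (C : Finset α) (n : Node α), C ⊆ C0 →
      (n ∈ (C0 \ C).image Node.base ∪ ({Node.s} : Finset (Node α)) ↔
        (∃ a ∈ C0, a ∉ C ∧ n = Node.base a) ∨ n = Node.s) := by
    intro C n _
    simp only [Finset.mem_union, Finset.mem_image, Finset.mem_sdiff,
      Finset.mem_singleton]
    constructor
    · rintro (⟨a, ⟨ha, hac⟩, h⟩ | h)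
      · exact Or.inl ⟨a, ha, hac, h.symm⟩
      · exact Or.inr h
    · rintro (⟨a, ha, hac, h⟩ | h)
      · exact Or.inl ⟨a, ⟨ha, hac⟩, h.symm⟩
      · exact Or.inr h
  constructor
  · -- MapsTo
    rintro C ⟨hCsub, huC, hlt⟩
    have hC : C ⊆ C0 := hCsub.subset
    refine ⟨?_, ?_, ?_, ?_, ?_⟩
    · -- union is the node set
      ext n
      cases n with
      | base a =>
          simp only [nodeSet, Finset.mem_union, Finset.mem_image,
            Finset.mem_sdiff, Finset.mem_singleton, Finset.mem_insert]
          constructor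
          · rintro ((⟨b, ⟨hb, -⟩, hba⟩ | h) | (⟨b, hb, hba⟩ | h))
            · exact Or.inl ⟨b, hb, hba⟩
            · exact Or.inr (Or.inl h)
            · exact Or.inl ⟨b, hC hb, hba⟩
            · exact Or.inr (Or.inr h)
          · rintro (⟨b, hb, hba⟩ | h | h)
            · by_cases hbc : b ∈ C
              · exact Or.inr (Or.inl ⟨b, hbc, hba⟩)
              · exact Or.inl (Or.inl ⟨b, ⟨hb, hbc⟩, hba⟩)
            · exact Or.inl (Or.inr h)
            · exact Or.inr (Or.inr h)
      | s => simp [nodeSet]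
      | t => simp [nodeSet]
    · -- disjoint
      rw [Finset.disjoint_left]
      rintro n hn1 hn2
      simp only [Finset.mem_union, Finset.mem_image, Finset.mem_sdiff,
        Finset.mem_singleton] at hn1 hn2
      rcases hn1 with ⟨a, ⟨ha, hac⟩, h⟩ | h
      · rcases hn2 with ⟨b, hb, h'⟩ | h'
        · subst h; have : a = b := by simpa using h'.symm
          exact hac (this ▸ hb)
        · subst h; exact absurd h' (by simp)
      · subst h
        rcases hn2 with ⟨b, hb, h'⟩ | h'
        · exact absurd h' (by simp)
        · exact absurd h' (by simp)
    · simp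
    · simp
    · rw [cutWeight C0 u r hr Nets net w hsub hcard hsize hw C hC huC]
      exact (hineq C hC huC).2 hlt
  refine ⟨?_, ?_⟩
  · -- InjOn
    rintro C1 - C2 - h
    have h2 : C1.image Node.base ∪ ({Node.t} : Finset (Node α))
        = C2.image Node.base ∪ {Node.t} := congrArg Prod.snd h
    ext a
    constructor <;> intro ha
    · have : Node.base a ∈ C2.image Node.base ∪ ({Node.t} : Finset (Node α)) := by
        rw [← h2]; exact Finset.mem_union_left _ (Finset.mem_image_of_mem _ ha)
      simpa using this
    · have : Node.base a ∈ C1.image Node.base ∪ ({Node.t} : Finset (Node α)) := by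
        rw [h2]; exact Finset.mem_union_left _ (Finset.mem_image_of_mem _ ha)
      simpa using this
  · -- SurjOn
    rintro ⟨B1, B2⟩ ⟨hun, hdis, hs, ht, hwlt⟩
    simp only at hun hdis hs ht hwlt
    set C := C0.filter (fun a => Node.base a ∈ B2) with hCdef
    have hCsub : C ⊆ C0 := Finset.filter_subset _ _
    have hbase_mem : ∀ a : α, Node.base a ∈ B1 ∪ B2 → a ∈ C0 := by
      intro a ha
      rw [hun] at ha
      simp only [nodeSet, Finset.mem_union, Finset.mem_image,
        Finset.mem_insert, Finset.mem_singleton] at ha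
      rcases ha with ⟨b, hb, hba⟩ | h | h
      · rwa [show a = b by simpa using hba.symm]
      · exact absurd h (by simp)
      · exact absurd h (by simp)
    have hmemC : ∀ a : α, a ∈ C ↔ Node.base a ∈ B2 := by
      intro a
      constructor
      · intro h; exact (Finset.mem_filter.1 h).2
      · intro h
        exact Finset.mem_filter.2 ⟨hbase_mem a (Finset.mem_union_right _ h), h⟩
    have hp2 : B2 = C.image Node.base ∪ {Node.t} := by
      ext n
      cases n with
      | base a =>
          simp only [Finset.mem_union, Finset.mem_image, Finset.mem_singleton]
          constructor
          · intro h
            exact Or.inl ⟨a, (hmemC a).2 h, rfl⟩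
          · rintro (⟨b, hb, hba⟩ | h)
            · rw [show a = b by simpa using hba.symm] at *
              exact (hmemC b).1 hb
            · exact absurd h (by simp)
      | s =>
          have hns : Node.s ∉ B2 := Finset.disjoint_left.1 hdis hs
          simp [hns]
      | t => simp [ht]
    have hp1 : B1 = (C0 \ C).image Node.base ∪ {Node.s} := by
      ext n
      cases n with
      | base a =>
          simp only [Finset.mem_union, Finset.mem_image, Finset.mem_sdiff,
            Finset.mem_singleton]
          constructor
          · intro h
            have haC0 : a ∈ C0 := hbase_mem a (Finset.mem_union_left _ h)
            have haC : a ∉ C := by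
              intro hc
              exact Finset.disjoint_left.1 hdis h ((hmemC a).1 hc)
            exact Or.inl ⟨a, ⟨haC0, haC⟩, rfl⟩
          · rintro (⟨b, ⟨hb, hbc⟩, hba⟩ | h)
            · rw [show a = b by simpa using hba.symm] at *
              have : Node.base b ∈ B1 ∪ B2 := by
                rw [hun]
                simp only [nodeSet, Finset.mem_union, Finset.mem_image]
                exact Or.inl ⟨b, hb, rfl⟩
              rcases Finset.mem_union.1 this with h1 | h2
              · exact h1
              · exact absurd ((hmemC b).2 h2) hbc
            · exact absurd h (by simp)
      | s => simp [hs]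
      | t =>
          have hnt : Node.t ∉ B1 := Finset.disjoint_right.1 hdis ht
          simp [hnt]
    -- u must be in C, else the cut has infinite weight
    have huC : u ∈ C := by
      by_contra huC
      have hub1 : Node.base u ∈ B1 := by
        rw [hp1]
        exact Finset.mem_union_left _
          (Finset.mem_image_of_mem _ (Finset.mem_sdiff.2 ⟨hu, huC⟩))
      have hcap : cliqueCap C0 r u Nets net w (Node.base u) Node.t = ⊤ := by
        simp [cliqueCap, hu]
      have h1 : (⊤ : ℝ≥0∞) ≤ ∑ y ∈ B2, cliqueCap C0 r u Nets net w (Node.base u) y := by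
        rw [← hcap]
        exact Finset.single_le_sum (fun _ _ => zero_le) ht
      have h2 : (⊤ : ℝ≥0∞) ≤ ∑ x ∈ B1, ∑ y ∈ B2, cliqueCap C0 r u Nets net w x y :=
        le_trans h1 (Finset.single_le_sum
          (f := fun x => ∑ y ∈ B2, cliqueCap C0 r u Nets net w x y)
          (fun _ _ => zero_le) hub1)
      have := lt_of_le_of_lt h2 hwlt
      exact absurd this (by simp)
    -- rewrite the weight
    have hw2 : (∑ x ∈ B1, ∑ y ∈ B2, cliqueCap C0 r u Nets net w x y)
        = ENNReal.ofReal (D0 * cut C0 r Nets net w C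
            + K0 * (D0 - dwS Nets net w C)) := by
      rw [hp1, hp2]
      exact cutWeight C0 u r hr Nets net w hsub hcard hsize hw C hCsub huC
    rw [hw2] at hwlt
    have hlt : cut C0 r Nets net w C / dwS Nets net w C < K0 / D0 :=
      (hineq C hCsub huC).1 hwlt
    have hne : C ≠ C0 := by
      intro h
      rw [h] at hlt
      exact absurd hlt (lt_irrefl _)
    refine ⟨C, ⟨⟨hCsub, fun h => hne (Finset.Subset.antisymm hCsub h)⟩, huC, hlt⟩, ?_⟩
    simp only [Prod.mk.injEq]
    exact ⟨hp1.symm, hp2.symm⟩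

end Stmt1
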